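/- arXiv:1804.08320 — 3 statements merged into one kernel-verified Lean document; each statement's English description precedes it below -/
import Mathlib

section
/- Let Γ_i > 0 for all i, and suppose z^k is a sequence of normalised relative equilibria (∇H(z^k) = −(L/4π)∇I(z^k), I(z^k) = 1) such that min_{i<j} |z_i^k − z_j^k| → 0 as k → ∞. Then a contradiction arises; i.e., there exists ε(Γ) > 0 such that every normalised relative equilibrium z satisfies |z_i − z_j|² > ε for all i < j. -/
open scoped BigOperators
open Filter Topology

noncomputable def vortexH {N : ℕ} (Γ : Fin N → ℝ) (z : Fin N → ℂ) : ℝ :=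
  -(1 / (4 * Real.pi)) *
    ∑ i, ∑ j, if i < j then Γ i * Γ j * Real.log (Complex.normSq (z i - z j)) else 0

noncomputable def gradH {N : ℕ} (Γ : Fin N → ℝ) (z : Fin N → ℂ) (i : Fin N) : ℂ :=
  (-(1 / (2 * Real.pi)) : ℝ) •
    ∑ j ∈ Finset.univ.erase i, ((Γ i * Γ j / Complex.normSq (z i - z j)) : ℝ) • (z i - z j)

noncomputable def momI {N : ℕ} (Γ : Fin N → ℝ) (z : Fin N → ℂ) : ℝ :=
  ∑ i, Γ i * Complex.normSq (z i)

noncomputable def momP {N : ℕ} (Γ : Fin N → ℝ) (z : Fin N → ℂ) : ℝ := ∑ i, Γ i * (z i).re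

noncomputable def momQ {N : ℕ} (Γ : Fin N → ℝ) (z : Fin N → ℂ) : ℝ := ∑ i, Γ i * (z i).im

noncomputable def gradI {N : ℕ} (Γ : Fin N → ℝ) (z : Fin N → ℂ) (i : Fin N) : ℂ :=
  ((2 * Γ i) : ℝ) • z i

def CollisionFree {N : ℕ} (z : Fin N → ℂ) : Prop := ∀ i j, i ≠ j → z i ≠ z j

noncomputable def totalL {N : ℕ} (Γ : Fin N → ℝ) : ℝ :=
  ∑ i, ∑ j, if i < j then Γ i * Γ j else 0

def IsVortexSolution {N : ℕ} (Γ : Fin N → ℝ) (z : ℝ → Fin N → ℂ) : Prop :=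
  ∀ t i, (Γ i : ℂ) * deriv (fun s => z s i) t = -Complex.I * gradH Γ (z t) i

noncomputable def vortexG {N : ℕ} (Γ : Fin N → ℝ) (z : Fin N → ℂ) : ℝ :=
  ∏ i, ∏ j, if i < j then ‖z i - z j‖ ^ (Γ i * Γ j) else 1

noncomputable def gradG {N : ℕ} (Γ : Fin N → ℝ) (z : Fin N → ℂ) (i : Fin N) : ℂ :=
  ∑ j ∈ Finset.univ.erase i,
    ((Γ i * Γ j * vortexG Γ z / Complex.normSq (z i - z j)) : ℝ) • (z i - z j)

def IsGSolution {N : ℕ} (Γ : Fin N → ℝ) (z : ℝ → Fin N → ℂ) : Prop :=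
  ∀ t i, (Γ i : ℂ) * deriv (fun s => z s i) t = -Complex.I * gradG Γ (z t) i

noncomputable def pbracket {N : ℕ} (Γ : Fin N → ℝ) (f g : (Fin N → ℂ) → ℝ) (z : Fin N → ℂ) : ℝ :=
  ∑ i, (1 / Γ i) *
    (fderiv ℝ f z (Pi.single i Complex.I) * fderiv ℝ g z (Pi.single i 1) -
     fderiv ℝ f z (Pi.single i 1) * fderiv ℝ g z (Pi.single i Complex.I))

private lemma F_eq {N : ℕ} (Γ : Fin N → ℝ) (w : Fin N → ℂ) (i : Fin N)
    (h : gradH Γ w i = (-(totalL Γ / (4 * Real.pi))) • gradI Γ w i) :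
    (∑ j ∈ Finset.univ.erase i,
      ((Γ i * Γ j / Complex.normSq (w i - w j)) : ℝ) • (w i - w j))
      = ((totalL Γ * Γ i : ℝ)) • w i := by
  have hπ : (Real.pi : ℝ) ≠ 0 := Real.pi_ne_zero
  simp only [gradH, gradI] at h
  set S := ∑ j ∈ Finset.univ.erase i,
      ((Γ i * Γ j / Complex.normSq (w i - w j)) : ℝ) • (w i - w j) with hS
  have h1 : ((-(2*Real.pi) : ℝ)) • (((-(1/(2*Real.pi)) : ℝ)) • S) = S := by
    rw [smul_smul, show ((-(2*Real.pi)) * (-(1/(2*Real.pi))) : ℝ) = 1 by field_simp, one_smul]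
  calc S = ((-(2*Real.pi) : ℝ)) • (((-(1/(2*Real.pi)) : ℝ)) • S) := h1.symm
    _ = ((-(2*Real.pi) : ℝ)) • ((-(totalL Γ / (4 * Real.pi)) : ℝ) • (((2 * Γ i) : ℝ) • w i)) := by
        rw [h]
    _ = ((totalL Γ * Γ i : ℝ)) • w i := by
        rw [smul_smul, smul_smul]
        congr 1
        field_simp
        ring

private noncomputable def gg {N : ℕ} (Γ : Fin N → ℝ) (p : ℂ) (u : Fin N → ℂ) (i j : Fin N) : ℝ :=
  Γ i * Γ j / Complex.normSq (u i - u j) * ((u i - u j) * (starRingEnd ℂ) (u i - p)).re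

private lemma gg_add_swap {N : ℕ} (Γ : Fin N → ℝ) (p : ℂ) (u : Fin N → ℂ) (i j : Fin N)
    (hu : u i ≠ u j) : gg Γ p u i j + gg Γ p u j i = Γ i * Γ j := by
  have hd : u i - u j ≠ 0 := sub_ne_zero.mpr hu
  have hns : Complex.normSq (u i - u j) ≠ 0 := (Complex.normSq_pos.mpr hd).ne'
  have hsym : u j - u i = -(u i - u j) := by ring
  simp only [gg, hsym, Complex.normSq_neg, mul_comm (Γ j) (Γ i)]
  rw [← mul_add]
  have : ((u i - u j) * (starRingEnd ℂ) (u i - p)).re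
      + (-(u i - u j) * (starRingEnd ℂ) (u j - p)).re
      = Complex.normSq (u i - u j) := by
    rw [neg_mul, Complex.neg_re, ← sub_eq_add_neg, ← Complex.sub_re, ← mul_sub, ← map_sub,
      show (u i - p) - (u j - p) = u i - u j by ring, Complex.mul_conj, Complex.ofReal_re]
  rw [this, div_mul_cancel₀ _ hns]

/-- The cluster identity for a single configuration. -/
private lemma cluster_identity {N : ℕ} (Γ : Fin N → ℝ) (p : ℂ) (V : Finset (Fin N))
    (u : Fin N → ℂ) (hcf : CollisionFree u)
    (heq : ∀ i, gradH Γ u i = (-(totalL Γ / (4 * Real.pi))) • gradI Γ u i) :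
    (1/2) * (∑ i ∈ V, ∑ j ∈ V.erase i, Γ i * Γ j)
      + ∑ i ∈ V, ∑ j ∈ Finset.univ \ V, gg Γ p u i j
      = ∑ i ∈ V, (totalL Γ * Γ i) * (u i * (starRingEnd ℂ) (u i - p)).re := by
  -- E-form of each row
  have hE : ∀ i : Fin N,
      ((∑ j ∈ Finset.univ.erase i, ((Γ i * Γ j / Complex.normSq (u i - u j)) : ℝ) • (u i - u j))
        * (starRingEnd ℂ) (u i - p)).re
      = ∑ j ∈ Finset.univ.erase i, gg Γ p u i j := by
    intro i
    rw [Finset.sum_mul, Complex.re_sum]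
    refine Finset.sum_congr rfl fun j _ => ?_
    rw [Complex.real_smul, mul_assoc, Complex.re_ofReal_mul]
    rfl
  have hsplit : ∀ i ∈ V, ∑ j ∈ Finset.univ.erase i, gg Γ p u i j
      = (∑ j ∈ V.erase i, gg Γ p u i j) + ∑ j ∈ Finset.univ \ V, gg Γ p u i j := by
    intro i hiV
    rw [← Finset.sum_filter_add_sum_filter_not (Finset.univ.erase i) (· ∈ V)]
    congr 1
    · apply Finset.sum_congr _ (fun _ _ => rfl)
      ext j
      simp only [Finset.mem_filter, Finset.mem_erase, Finset.mem_univ, and_true]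
      try tauto
    · apply Finset.sum_congr _ (fun _ _ => rfl)
      ext j
      simp only [Finset.mem_filter, Finset.mem_erase, Finset.mem_univ, and_true,
        Finset.mem_sdiff, true_and]
      constructor
      · rintro ⟨-, h⟩; exact h
      · intro h; exact ⟨fun e => h (e ▸ hiV), h⟩
  have main : ∀ i ∈ V, (∑ j ∈ V.erase i, gg Γ p u i j) + (∑ j ∈ Finset.univ \ V, gg Γ p u i j)
      = (totalL Γ * Γ i) * (u i * (starRingEnd ℂ) (u i - p)).re := by
    intro i hiV
    rw [← hsplit i hiV, ← hE i, F_eq Γ u i (heq i), Complex.real_smul, mul_assoc,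
      Complex.re_ofReal_mul]
  have hA : ∑ i ∈ V, ∑ j ∈ V.erase i, gg Γ p u i j
      = (1/2) * (∑ i ∈ V, ∑ j ∈ V.erase i, Γ i * Γ j) := by
    have hswap : ∑ i ∈ V, ∑ j ∈ V.erase i, gg Γ p u i j
        = ∑ i ∈ V, ∑ j ∈ V.erase i, gg Γ p u j i := by
      refine Finset.sum_comm' ?_
      intro a b
      simp only [Finset.mem_erase]
      tauto
    have h2 : ∑ i ∈ V, ∑ j ∈ V.erase i, (gg Γ p u i j + gg Γ p u j i)
        = ∑ i ∈ V, ∑ j ∈ V.erase i, Γ i * Γ j := by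
      refine Finset.sum_congr rfl fun i _ => Finset.sum_congr rfl fun j hj => ?_
      have hij : i ≠ j := fun e => (Finset.mem_erase.mp hj).1 e.symm
      exact gg_add_swap Γ p u i j (hcf i j hij)
    have := h2
    simp only [Finset.sum_add_distrib] at this
    rw [← hswap] at this
    linarith
  calc (1/2) * (∑ i ∈ V, ∑ j ∈ V.erase i, Γ i * Γ j)
        + ∑ i ∈ V, ∑ j ∈ Finset.univ \ V, gg Γ p u i j
      = ∑ i ∈ V, ((∑ j ∈ V.erase i, gg Γ p u i j) + ∑ j ∈ Finset.univ \ V, gg Γ p u i j) := by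
        rw [Finset.sum_add_distrib, hA]
    _ = ∑ i ∈ V, (totalL Γ * Γ i) * (u i * (starRingEnd ℂ) (u i - p)).re :=
        Finset.sum_congr rfl main

/-- mutual distances of normalised relative equilibria are uniformly bounded below. -/
theorem stmt9 {N : ℕ} (Γ : Fin N → ℝ) (hΓ : ∀ i, 0 < Γ i) :
    ∃ ε > (0 : ℝ), ∀ z : Fin N → ℂ, CollisionFree z →
      (∀ i, gradH Γ z i = (-(totalL Γ / (4 * Real.pi))) • gradI Γ z i) →
      momI Γ z = 1 →
      ∀ i j, i ≠ j → ε < Complex.normSq (z i - z j) := by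
  by_contra hcon
  push_neg at hcon
  have hseq : ∀ n : ℕ, ∃ z : Fin N → ℂ, CollisionFree z ∧
      (∀ i, gradH Γ z i = (-(totalL Γ / (4 * Real.pi))) • gradI Γ z i) ∧ momI Γ z = 1 ∧
      ∃ i j, i ≠ j ∧ Complex.normSq (z i - z j) ≤ 1/(n+1) := by
    intro n
    obtain ⟨z, h⟩ := hcon (1/(n+1)) (by positivity)
    exact ⟨z, h⟩
  choose z hCF hEq hI ii jj hne hle using hseq
  -- boundedness from momI = 1
  have hbound : ∀ n i, z n i ∈ Metric.closedBall (0:ℂ) (Real.sqrt (1 / Γ i)) := by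
    intro n i
    have h1 : Γ i * Complex.normSq (z n i) ≤ 1 := by
      rw [← hI n]
      exact Finset.single_le_sum (f := fun j => Γ j * Complex.normSq (z n j))
        (fun j _ => mul_nonneg (hΓ j).le (Complex.normSq_nonneg _)) (Finset.mem_univ i)
    have h2 : Complex.normSq (z n i) ≤ 1 / Γ i := by
      rw [le_div_iff₀ (hΓ i)]; linarith [mul_comm (Γ i) (Complex.normSq (z n i))]
    rw [Metric.mem_closedBall, dist_zero_right, Complex.norm_def]
    exact Real.sqrt_le_sqrt h2
  have hK : IsCompact (Set.pi Set.univ (fun i : Fin N => Metric.closedBall (0:ℂ) (Real.sqrt (1 / Γ i)))) :=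
    isCompact_univ_pi (fun i => isCompact_closedBall _ _)
  obtain ⟨x, -, φ, hφ, hconv⟩ := hK.tendsto_subseq (x := z)
    (fun n => Set.mem_univ_pi.mpr (fun i => hbound n i))
  -- extract a constant colliding pair
  have hpair_ex : ∃ q : Fin N × Fin N, {n | (ii (φ n), jj (φ n)) = q}.Infinite := by
    by_contra hfin
    push_neg at hfin
    have : (Set.univ : Set ℕ).Finite := by
      have hcover : (Set.univ : Set ℕ)
          = ⋃ q ∈ (Set.univ : Set (Fin N × Fin N)), {n | (ii (φ n), jj (φ n)) = q} := by
        ext n; simp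
      rw [hcover]
      exact Set.Finite.biUnion Set.finite_univ (fun q _ => hfin q)
    exact Set.infinite_univ this
  obtain ⟨⟨i₀, j₀⟩, hinf⟩ := hpair_ex
  obtain ⟨ψ, hψ, hpair⟩ :=
    Filter.extraction_of_frequently_atTop (Nat.frequently_atTop_iff_infinite.mpr hinf)
  set w : ℕ → Fin N → ℂ := fun n => z (φ (ψ n)) with hw
  have hwconv : Tendsto w atTop (𝓝 x) := hconv.comp hψ.tendsto_atTop
  have hcoord : ∀ i, Tendsto (fun n => w n i) atTop (𝓝 (x i)) := tendsto_pi_nhds.mp hwconv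
  have hii : ∀ n, ii (φ (ψ n)) = i₀ := fun n => congrArg Prod.fst (hpair n)
  have hjj : ∀ n, jj (φ (ψ n)) = j₀ := fun n => congrArg Prod.snd (hpair n)
  have hij0 : i₀ ≠ j₀ := by
    have := hne (φ (ψ 0)); rwa [hii 0, hjj 0] at this
  -- the limit has a collision
  have hcol : x i₀ = x j₀ := by
    have h1 : Tendsto (fun n => Complex.normSq (w n i₀ - w n j₀)) atTop
        (𝓝 (Complex.normSq (x i₀ - x j₀))) :=
      (Complex.continuous_normSq.tendsto _).comp ((hcoord i₀).sub (hcoord j₀))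
    have h2 : ∀ n : ℕ, Complex.normSq (w n i₀ - w n j₀) ≤ 1/((n:ℝ)+1) := by
      intro n
      have h3 := hle (φ (ψ n))
      rw [hii n, hjj n] at h3
      refine h3.trans ?_
      have hmono : (n:ℝ) + 1 ≤ (φ (ψ n) : ℝ) + 1 := by
        have : n ≤ φ (ψ n) := le_trans hψ.le_apply hφ.le_apply
        exact_mod_cast Nat.succ_le_succ this
      exact one_div_le_one_div_of_le (by positivity) hmono
    have h0 : Tendsto (fun n : ℕ => 1/((n:ℝ)+1)) atTop (𝓝 0) :=
      tendsto_one_div_add_atTop_nhds_zero_nat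
    have hle0 : Complex.normSq (x i₀ - x j₀) ≤ 0 := le_of_tendsto_of_tendsto' h1 h0 h2
    have : Complex.normSq (x i₀ - x j₀) = 0 :=
      le_antisymm hle0 (Complex.normSq_nonneg _)
    exact sub_eq_zero.mp (Complex.normSq_eq_zero.mp this)
  set p : ℂ := x i₀ with hp
  set V : Finset (Fin N) := Finset.univ.filter (fun i => x i = p) with hV
  have hi₀V : i₀ ∈ V := Finset.mem_filter.mpr ⟨Finset.mem_univ _, rfl⟩
  have hj₀V : j₀ ∈ V := Finset.mem_filter.mpr ⟨Finset.mem_univ _, hcol.symm⟩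
  have hxV : ∀ i ∈ V, x i = p := fun i hi => (Finset.mem_filter.mp hi).2
  have hxnV : ∀ j ∈ Finset.univ \ V, x j ≠ p := by
    intro j hj
    simp only [hV, Finset.mem_sdiff, Finset.mem_filter, Finset.mem_univ, true_and] at hj
    exact hj
  set C : ℝ := (1/2) * (∑ i ∈ V, ∑ j ∈ V.erase i, Γ i * Γ j) with hC
  -- cross term tends to 0
  have hBt : Tendsto (fun n => ∑ i ∈ V, ∑ j ∈ Finset.univ \ V, gg Γ p (w n) i j) atTop (𝓝 0) := by
    have : (0:ℝ) = ∑ i ∈ V, ∑ j ∈ Finset.univ \ V, (0:ℝ) := by simp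
    rw [this]
    refine tendsto_finset_sum _ (fun i hi => tendsto_finset_sum _ (fun j hj => ?_))
    have hxi : x i = p := hxV i hi
    have hxj : x j ≠ p := hxnV j hj
    have hden_ne : Complex.normSq (x i - x j) ≠ 0 := by
      rw [hxi]
      exact (Complex.normSq_pos.mpr (sub_ne_zero.mpr (fun e => hxj e.symm))).ne'
    have hnum : Tendsto (fun n => ((w n i - w n j) * (starRingEnd ℂ) (w n i - p)).re) atTop
        (𝓝 (((x i - x j) * (starRingEnd ℂ) (x i - p)).re)) :=
      (Complex.continuous_re.tendsto _).comp
        (((hcoord i).sub (hcoord j)).mul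
          ((Complex.continuous_conj.tendsto _).comp ((hcoord i).sub tendsto_const_nhds)))
    have hden : Tendsto (fun n => Complex.normSq (w n i - w n j)) atTop
        (𝓝 (Complex.normSq (x i - x j))) :=
      (Complex.continuous_normSq.tendsto _).comp ((hcoord i).sub (hcoord j))
    have hterm : Tendsto (fun n => gg Γ p (w n) i j) atTop
        (𝓝 (Γ i * Γ j / Complex.normSq (x i - x j)
          * ((x i - x j) * (starRingEnd ℂ) (x i - p)).re)) := by
      simp only [gg]
      exact (Filter.Tendsto.div tendsto_const_nhds hden hden_ne).mul hnum
    have hval : Γ i * Γ j / Complex.normSq (x i - x j)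
        * ((x i - x j) * (starRingEnd ℂ) (x i - p)).re = 0 := by
      rw [hxi, sub_self, map_zero, mul_zero, Complex.zero_re, mul_zero]
    rwa [hval] at hterm
  -- RHS tends to 0
  have hRt : Tendsto (fun n => ∑ i ∈ V, (totalL Γ * Γ i) * ((w n i) * (starRingEnd ℂ) (w n i - p)).re)
      atTop (𝓝 0) := by
    have : (0:ℝ) = ∑ i ∈ V, (0:ℝ) := by simp
    rw [this]
    refine tendsto_finset_sum _ (fun i hi => ?_)
    have hxi : x i = p := hxV i hi
    have hnum : Tendsto (fun n => ((w n i) * (starRingEnd ℂ) (w n i - p)).re) atTop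
        (𝓝 (((x i) * (starRingEnd ℂ) (x i - p)).re)) :=
      (Complex.continuous_re.tendsto _).comp
        ((hcoord i).mul
          ((Complex.continuous_conj.tendsto _).comp ((hcoord i).sub tendsto_const_nhds)))
    have hval : ((x i) * (starRingEnd ℂ) (x i - p)).re = 0 := by
      rw [hxi, sub_self, map_zero, mul_zero, Complex.zero_re]
    rw [← mul_zero (totalL Γ * Γ i), ← hval]
    exact hnum.const_mul _
  -- the identity along the sequence
  have hkey : ∀ n : ℕ, C = (∑ i ∈ V, (totalL Γ * Γ i) * ((w n i) * (starRingEnd ℂ) (w n i - p)).re)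
      - ∑ i ∈ V, ∑ j ∈ Finset.univ \ V, gg Γ p (w n) i j := by
    intro n
    have := cluster_identity Γ p V (w n) (hCF (φ (ψ n))) (hEq (φ (ψ n)))
    rw [hC]
    linarith
  have hCt : Tendsto (fun _ : ℕ => C) atTop (𝓝 0) := by
    have h := hRt.sub hBt
    rw [sub_zero] at h
    exact h.congr (fun n => (hkey n).symm)
  have hC0 : C = 0 := tendsto_nhds_unique tendsto_const_nhds hCt
  -- but C > 0
  have hCpos : 0 < C := by
    rw [hC]
    have hpos : 0 < ∑ i ∈ V, ∑ j ∈ V.erase i, Γ i * Γ j := by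
      refine Finset.sum_pos' (fun i _ => Finset.sum_nonneg
        (fun j _ => (mul_pos (hΓ i) (hΓ j)).le)) ⟨i₀, hi₀V, ?_⟩
      refine Finset.sum_pos' (fun j _ => (mul_pos (hΓ i₀) (hΓ j)).le) ⟨j₀, ?_, mul_pos (hΓ i₀) (hΓ j₀)⟩
      exact Finset.mem_erase.mpr ⟨hij0.symm, hj₀V⟩
    linarith
  linarith
end

section
/- For positive vorticities, the set H₁ of energy values of normalised relative equilibria, H₁ = { H(z) : ∇H(z) = −(L/4π)∇I(z), I(z) = 1, z collision-free }, is a closed subset of ℝ. -/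
open scoped BigOperators

open Filter Topology in
/-- If the vortices stay in a ball and a pair collides in the limit, the energy blows up. -/
lemma vortexH_blowup {N : ℕ} (Γ : Fin N → ℝ) (hΓ : ∀ i, 0 < Γ i)
    (z : ℕ → Fin N → ℂ) (hcf : ∀ n, CollisionFree (z n)) (M : ℝ)
    (hb : ∀ n i, ‖z n i‖ ≤ M) (i0 j0 : Fin N) (hij : i0 < j0)
    (hten : Tendsto (fun n => Complex.normSq (z n i0 - z n j0)) atTop (𝓝[>] 0)) :
    Tendsto (fun n => vortexH Γ (z n)) atTop atTop := by
  set B : ℝ := 4 * M ^ 2 + 1 with hB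
  have hM0 : 0 ≤ M := le_trans (norm_nonneg _) (hb 0 i0)
  have hB1 : (1 : ℝ) ≤ B := by nlinarith
  have hnormSqpos : ∀ n (i j : Fin N), i < j → 0 < Complex.normSq (z n i - z n j) := by
    intro n i j h
    have : z n i - z n j ≠ 0 := sub_ne_zero.mpr (hcf n i j (ne_of_lt h))
    exact Complex.normSq_pos.mpr this
  have hnormSqle : ∀ n (i j : Fin N), Complex.normSq (z n i - z n j) ≤ B := by
    intro n i j
    have h1 : ‖z n i - z n j‖ ≤ 2 * M := by
      calc ‖z n i - z n j‖ ≤ ‖z n i‖ + ‖z n j‖ := norm_sub_le _ _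
        _ ≤ M + M := add_le_add (hb n i) (hb n j)
        _ = 2 * M := by ring
    have h2 : Complex.normSq (z n i - z n j) = ‖z n i - z n j‖ ^ 2 := by
      rw [← Complex.sq_norm]
    nlinarith [norm_nonneg (z n i - z n j)]
  -- the double sum as a sum over pairs
  set g : ℕ → Fin N × Fin N → ℝ := fun n p =>
    if p.1 < p.2 then Γ p.1 * Γ p.2 * Real.log (Complex.normSq (z n p.1 - z n p.2)) else 0
    with hg
  have hsum : ∀ n, (∑ i, ∑ j, if i < j then
      Γ i * Γ j * Real.log (Complex.normSq (z n i - z n j)) else 0) = ∑ p, g n p := by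
    intro n
    rw [← Finset.univ_product_univ, Finset.sum_product]
  set C : ℝ := ∑ p : Fin N × Fin N, |Γ p.1 * Γ p.2 * Real.log B| with hC
  set t : ℕ → ℝ := fun n => Γ i0 * Γ j0 * Real.log (Complex.normSq (z n i0 - z n j0)) with ht
  have hbound : ∀ n, ∑ p, g n p ≤ t n + C := by
    intro n
    have hsplit : ∑ p, g n p
        = ∑ p ∈ Finset.univ.erase (i0, j0), g n p + g n (i0, j0) :=
      (Finset.sum_erase_add _ _ (Finset.mem_univ _)).symm
    have hgp : g n (i0, j0) = t n := by simp [hg, ht, hij]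
    have hrest : ∑ p ∈ Finset.univ.erase (i0, j0), g n p ≤ C := by
      calc ∑ p ∈ Finset.univ.erase (i0, j0), g n p
          ≤ ∑ p ∈ Finset.univ.erase (i0, j0), |Γ p.1 * Γ p.2 * Real.log B| := by
            apply Finset.sum_le_sum
            intro p _
            by_cases h : p.1 < p.2
            · have hlog : Real.log (Complex.normSq (z n p.1 - z n p.2)) ≤ Real.log B :=
                Real.log_le_log (hnormSqpos n p.1 p.2 h) (hnormSqle n p.1 p.2)
              have hpos : 0 ≤ Γ p.1 * Γ p.2 := le_of_lt (mul_pos (hΓ p.1) (hΓ p.2))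
              calc g n p = Γ p.1 * Γ p.2 * Real.log (Complex.normSq (z n p.1 - z n p.2)) := by
                    simp [hg, h]
                _ ≤ Γ p.1 * Γ p.2 * Real.log B := mul_le_mul_of_nonneg_left hlog hpos
                _ ≤ |Γ p.1 * Γ p.2 * Real.log B| := le_abs_self _
            · simp [hg, h, abs_nonneg]
              positivity
        _ ≤ C := Finset.sum_le_sum_of_subset_of_nonneg (Finset.subset_univ _)
            (fun p _ _ => abs_nonneg _)
    rw [hsplit, hgp]
    linarith
  have htb : Tendsto t atTop atBot := by
    have hlog : Tendsto (fun n => Real.log (Complex.normSq (z n i0 - z n j0))) atTop atBot :=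
      Real.tendsto_log_nhdsGT_zero.comp hten
    exact hlog.const_mul_atBot (mul_pos (hΓ i0) (hΓ j0))
  have hsb : Tendsto (fun n => ∑ p, g n p) atTop atBot := by
    apply tendsto_atBot_mono hbound
    exact tendsto_atBot_add_const_right _ C htb
  have hcoef : -(1 / (4 * Real.pi)) < 0 := by
    have hp := Real.pi_pos
    have h4 : (0:ℝ) < 1 / (4 * Real.pi) := by positivity
    linarith
  have := hsb.const_mul_atBot_of_neg hcoef
  refine this.congr fun n => ?_
  rw [vortexH, hsum n]

/-- the set of energies of normalised relative equilibria is closed. -/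
theorem stmt10 {N : ℕ} (Γ : Fin N → ℝ) (hΓ : ∀ i, 0 < Γ i) :
    IsClosed {h : ℝ | ∃ z : Fin N → ℂ, CollisionFree z ∧
      (∀ i, gradH Γ z i = (-(totalL Γ / (4 * Real.pi))) • gradI Γ z i) ∧
      momI Γ z = 1 ∧ vortexH Γ z = h} := by
  set c : ℝ := -(totalL Γ / (4 * Real.pi)) with hc
  apply IsSeqClosed.isClosed
  intro hs h hmem hlim
  choose z hcf hgrad hI hH using hmem
  set r : Fin N → ℝ := fun i => Real.sqrt (1 / Γ i) with hr
  have hzi : ∀ n i, ‖z n i‖ ≤ r i := by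
    intro n i
    have h1 : Γ i * Complex.normSq (z n i) ≤ 1 := by
      rw [← hI n, momI]
      exact Finset.single_le_sum
        (fun j _ => mul_nonneg (le_of_lt (hΓ j)) (Complex.normSq_nonneg _))
        (Finset.mem_univ i)
    have h2 : Complex.normSq (z n i) = ‖z n i‖ ^ 2 := by rw [← Complex.sq_norm]
    rw [hr, Real.le_sqrt (norm_nonneg _) (one_div_nonneg.mpr (hΓ i).le)]
    rw [le_div_iff₀ (hΓ i)]
    nlinarith [hΓ i]
  set K : Set (Fin N → ℂ) := Set.univ.pi (fun i => Metric.closedBall 0 (r i)) with hK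
  have hKc : IsCompact K := isCompact_univ_pi (fun i => isCompact_closedBall 0 (r i))
  have hmemK : ∀ n, z n ∈ K := by
    intro n
    rw [hK, Set.mem_univ_pi]
    intro i
    rw [Metric.mem_closedBall, dist_zero_right]
    exact hzi n i
  obtain ⟨w, _, φ, hφ, hzw⟩ := hKc.tendsto_subseq hmemK
  have hcoord : ∀ i, Filter.Tendsto (fun n => z (φ n) i) Filter.atTop (nhds (w i)) := by
    intro i
    exact ((continuous_apply i).tendsto w).comp hzw
  have hlimφ : Filter.Tendsto (fun n => hs (φ n)) Filter.atTop (nhds h) :=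
    hlim.comp hφ.tendsto_atTop
  have hHφ : ∀ n, vortexH Γ (z (φ n)) = hs (φ n) := fun n => hH (φ n)
  -- the limit configuration is collision-free
  have hwcf : CollisionFree w := by
    intro i j hij hcol
    -- wlog to an ordered pair
    have key : ∀ i0 j0 : Fin N, i0 < j0 → w i0 = w j0 → False := by
      intro i0 j0 h0 hw
      have hMb : ∀ n i, ‖z (φ n) i‖ ≤ ∑ k, r k := by
        intro n i
        refine le_trans (hzi (φ n) i) ?_
        have hrk : ∀ k, 0 ≤ r k := fun k => by rw [hr]; exact Real.sqrt_nonneg _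
        exact Finset.single_le_sum (f := r) (fun k _ => hrk k) (Finset.mem_univ i)
      have hten : Filter.Tendsto (fun n => Complex.normSq (z (φ n) i0 - z (φ n) j0))
          Filter.atTop (nhdsWithin 0 (Set.Ioi 0)) := by
        rw [tendsto_nhdsWithin_iff]
        constructor
        · have : Filter.Tendsto (fun n => z (φ n) i0 - z (φ n) j0)
              Filter.atTop (nhds (w i0 - w j0)) := (hcoord i0).sub (hcoord j0)
          have h2 := (Complex.continuous_normSq.tendsto _).comp this
          rwa [hw, sub_self, Complex.normSq_zero] at h2
        · refine Filter.Eventually.of_forall fun n => ?_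
          exact Complex.normSq_pos.mpr
            (sub_ne_zero.mpr (hcf (φ n) i0 j0 (ne_of_lt h0)))
      have hblow := vortexH_blowup Γ hΓ (fun n => z (φ n)) (fun n => hcf (φ n))
        (∑ k, r k) hMb i0 j0 h0 hten
      have : Filter.Tendsto (fun n => vortexH Γ (z (φ n))) Filter.atTop (nhds h) := by
        refine hlimφ.congr fun n => (hHφ n).symm
      exact not_tendsto_atTop_of_tendsto_nhds this hblow
    rcases lt_or_gt_of_ne hij with hlt | hgt
    · exact key i j hlt hcol
    · exact key j i hgt hcol.symm
  -- continuity arguments to pass to the limit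
  refine ⟨w, hwcf, ?_, ?_, ?_⟩
  · -- gradient condition
    intro i
    have h1 : Filter.Tendsto (fun n => gradH Γ (z (φ n)) i) Filter.atTop
        (nhds (gradH Γ w i)) := by
      unfold gradH
      apply Filter.Tendsto.const_smul
      apply tendsto_finset_sum
      intro j hj
      have hji : j ≠ i := Finset.ne_of_mem_erase hj
      have hwne : w i - w j ≠ 0 := sub_ne_zero.mpr (hwcf i j (Ne.symm hji))
      have hsub : Filter.Tendsto (fun n => z (φ n) i - z (φ n) j) Filter.atTop
          (nhds (w i - w j)) := (hcoord i).sub (hcoord j)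
      have hns : Filter.Tendsto (fun n => Complex.normSq (z (φ n) i - z (φ n) j))
          Filter.atTop (nhds (Complex.normSq (w i - w j))) :=
        (Complex.continuous_normSq.tendsto _).comp hsub
      have hnz : Complex.normSq (w i - w j) ≠ 0 := (Complex.normSq_pos.mpr hwne).ne'
      exact (((tendsto_const_nhds.div hns hnz)).smul hsub)
    have h2 : Filter.Tendsto (fun n => gradH Γ (z (φ n)) i) Filter.atTop
        (nhds (c • gradI Γ w i)) := by
      have hgi : Filter.Tendsto (fun n => gradI Γ (z (φ n)) i) Filter.atTop
          (nhds (gradI Γ w i)) := by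
        unfold gradI
        exact (hcoord i).const_smul _
      have := hgi.const_smul c
      refine this.congr fun n => ?_
      exact (hgrad (φ n) i).symm
    exact tendsto_nhds_unique h1 h2
  · -- momI = 1
    have h1 : Filter.Tendsto (fun n => momI Γ (z (φ n))) Filter.atTop
        (nhds (momI Γ w)) := by
      unfold momI
      apply tendsto_finset_sum
      intro i _
      exact (tendsto_const_nhds.mul ((Complex.continuous_normSq.tendsto _).comp (hcoord i)))
    have h2 : Filter.Tendsto (fun n => momI Γ (z (φ n))) Filter.atTop (nhds 1) := by
      simp only [hI]
      exact tendsto_const_nhds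
    exact tendsto_nhds_unique h1 h2
  · -- vortexH = h
    have h1 : Filter.Tendsto (fun n => vortexH Γ (z (φ n))) Filter.atTop
        (nhds (vortexH Γ w)) := by
      unfold vortexH
      apply Filter.Tendsto.const_mul
      apply tendsto_finset_sum
      intro i _
      apply tendsto_finset_sum
      intro j _
      by_cases hij : i < j
      · simp only [if_pos hij]
        have hwne : w i - w j ≠ 0 := sub_ne_zero.mpr (hwcf i j (ne_of_lt hij))
        have hsub : Filter.Tendsto (fun n => z (φ n) i - z (φ n) j) Filter.atTop
            (nhds (w i - w j)) := (hcoord i).sub (hcoord j)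
        have hns : Filter.Tendsto (fun n => Complex.normSq (z (φ n) i - z (φ n) j))
            Filter.atTop (nhds (Complex.normSq (w i - w j))) :=
          (Complex.continuous_normSq.tendsto _).comp hsub
        have hnz : Complex.normSq (w i - w j) ≠ 0 := (Complex.normSq_pos.mpr hwne).ne'
        exact tendsto_const_nhds.mul ((Real.continuousAt_log hnz).tendsto.comp hns)
      · simp only [if_neg hij]
        exact tendsto_const_nhds
    have h2 : Filter.Tendsto (fun n => vortexH Γ (z (φ n))) Filter.atTop (nhds h) :=
      hlimφ.congr fun n => (hHφ n).symm
    exact tendsto_nhds_unique h1 h2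
end

section
/- For positive vorticities, every sublevel-compatible energy surface of the reduced N-vortex Hamiltonian is bounded away from collisions: if W ∈ ℝ^{2N−2} satisfies Σ |W_i|² = 1 and H̄(W) = c, then each squared mutual distance |z_i − z_j|², expressed as a quadratic form Q_{ij}(W) in W, satisfies ε ≤ Q_{ij}(W) ≤ C for constants ε, C > 0 depending only on c and the vorticities; consequently the set {W ∈ S^{2N−3} : H̄(W) = c} is compact. -/
open scoped BigOperators

/-- on the reduced energy surface, all squared mutual distances Q_{ij}(W) are
bounded between positive constants, and the energy surface on the unit sphere is compact. -/
theorem stmt19 {N m : ℕ} (Γ : Fin N → ℝ) (hΓ : ∀ i, 0 < Γ i)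
    (Q : Fin N → Fin N → EuclideanSpace ℝ (Fin m) → ℝ)
    (hQcont : ∀ i j, Continuous (Q i j))
    (hQnonneg : ∀ i j W, 0 ≤ Q i j W)
    (C₀ : ℝ) (hC₀ : 0 < C₀)
    (hQbound : ∀ i j W, Q i j W ≤ C₀ * ‖W‖ ^ 2)
    (c : ℝ) (Hbar : EuclideanSpace ℝ (Fin m) → ℝ)
    (hHbar : ∀ W, Hbar W =
      -(1 / (4 * Real.pi)) * ∑ i, ∑ j, if i < j then Γ i * Γ j * Real.log (Q i j W) else 0) :
    (∃ ε > (0 : ℝ), ∃ C > (0 : ℝ), ∀ W : EuclideanSpace ℝ (Fin m), ‖W‖ = 1 →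
      (∀ i j, i < j → 0 < Q i j W) → Hbar W = c →
      ∀ i j, i < j → ε ≤ Q i j W ∧ Q i j W ≤ C) ∧
    IsCompact {W : EuclideanSpace ℝ (Fin m) |
      ‖W‖ = 1 ∧ (∀ i j, i < j → 0 < Q i j W) ∧ Hbar W = c} := by
  have hπ : (0:ℝ) < Real.pi := Real.pi_pos
  have hπne : Real.pi ≠ 0 := ne_of_gt hπ
  have key : ∃ ε > (0:ℝ), ∀ W : EuclideanSpace ℝ (Fin m), ‖W‖ = 1 →
      (∀ i j, i < j → 0 < Q i j W) → Hbar W = c →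
      ∀ i j, i < j → ε ≤ Q i j W := by
    by_cases hP : ∃ i j : Fin N, i < j
    · obtain ⟨i₀, j₀, hij₀⟩ := hP
      haveI : Nonempty (Fin N) := ⟨i₀⟩
      set γ : ℝ := Finset.univ.inf' Finset.univ_nonempty Γ with hγdef
      have hγ : 0 < γ := by
        obtain ⟨i, _, hi⟩ := Finset.exists_mem_eq_inf' Finset.univ_nonempty Γ
        rw [hγdef, hi]; exact hΓ i
      have hγle : ∀ i, γ ≤ Γ i := fun i => Finset.inf'_le _ (Finset.mem_univ i)
      set P : Finset (Fin N × Fin N) :=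
        (Finset.univ ×ˢ Finset.univ).filter (fun p => p.1 < p.2) with hPdef
      set S : ℝ := ∑ p ∈ P, Γ p.1 * Γ p.2 with hSdef
      set B : ℝ := max (Real.log C₀) 0 with hBdef
      have hB : 0 ≤ B := le_max_right _ _
      set A : ℝ := -(4 * Real.pi * c) - S * B with hAdef
      refine ⟨Real.exp (-|A| / γ ^ 2), Real.exp_pos _, ?_⟩
      intro W hW hpos hc i j hij
      set g : Fin N × Fin N → ℝ := fun p => Γ p.1 * Γ p.2 * Real.log (Q p.1 p.2 W) with hgdef
      have hT : ∑ p ∈ P, g p = -(4 * Real.pi * c) := by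
        have h := (hHbar W).symm.trans hc
        have hsum : ∑ p ∈ P, g p
            = ∑ i, ∑ j, if i < j then Γ i * Γ j * Real.log (Q i j W) else 0 := by
          rw [hPdef, Finset.sum_filter, Finset.sum_product]
        rw [hsum]
        field_simp at h
        linarith
      have hmemP : (i, j) ∈ P := by simp [hPdef, hij]
      have hQle : ∀ p ∈ P, Q p.1 p.2 W ≤ C₀ := fun p _ => by
        have h := hQbound p.1 p.2 W; rwa [hW, one_pow, mul_one] at h
      have hbound : ∀ p ∈ P.erase (i, j), g p ≤ Γ p.1 * Γ p.2 * B := by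
        intro p hp
        have hpP := Finset.mem_of_mem_erase hp
        have hplt : p.1 < p.2 := (Finset.mem_filter.mp hpP).2
        have hq := hpos p.1 p.2 hplt
        have hlog : Real.log (Q p.1 p.2 W) ≤ B :=
          le_trans (Real.log_le_log hq (hQle p hpP)) (le_max_left _ _)
        exact mul_le_mul_of_nonneg_left hlog (le_of_lt (mul_pos (hΓ _) (hΓ _)))
      have hA' : A ≤ g (i, j) := by
        have hsplit := Finset.add_sum_erase P g hmemP
        have h1 : ∑ p ∈ P.erase (i, j), g p ≤ S * B := by
          calc ∑ p ∈ P.erase (i, j), g p ≤ ∑ p ∈ P.erase (i, j), Γ p.1 * Γ p.2 * B :=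
                Finset.sum_le_sum hbound
            _ ≤ ∑ p ∈ P, Γ p.1 * Γ p.2 * B := Finset.sum_le_sum_of_subset_of_nonneg
                (Finset.erase_subset _ _) (fun p _ _ =>
                  mul_nonneg (le_of_lt (mul_pos (hΓ _) (hΓ _))) hB)
            _ = S * B := by rw [hSdef, Finset.sum_mul]
        rw [hAdef]
        linarith [hT, hsplit]
      have hΓΓpos : 0 < Γ i * Γ j := mul_pos (hΓ i) (hΓ j)
      have hΓΓ : γ ^ 2 ≤ Γ i * Γ j := by
        have h1 := hγle i
        have h2 := hγle j
        nlinarith [hγ.le]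
      have hlog : -|A| / γ ^ 2 ≤ Real.log (Q i j W) := by
        have h1 : -|A| ≤ Γ i * Γ j * Real.log (Q i j W) := le_trans (neg_abs_le A) hA'
        have h2 : -|A| / (Γ i * Γ j) ≤ Real.log (Q i j W) :=
          (div_le_iff₀ hΓΓpos).mpr (by linarith)
        have h3 : |A| / (Γ i * Γ j) ≤ |A| / γ ^ 2 :=
          div_le_div_of_nonneg_left (abs_nonneg A) (pow_pos hγ 2) hΓΓ
        have h4 : -|A| / γ ^ 2 ≤ -|A| / (Γ i * Γ j) := by
          rw [neg_div, neg_div]; linarith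
        linarith
      have h5 := Real.exp_le_exp.mpr hlog
      rwa [Real.exp_log (hpos i j hij)] at h5
    · exact ⟨1, one_pos, fun W _ _ _ i j hij => absurd ⟨i, j, hij⟩ hP⟩
  obtain ⟨ε, hε, hkey⟩ := key
  constructor
  · exact ⟨ε, hε, C₀, hC₀, fun W h1 h2 h3 i j hij =>
      ⟨hkey W h1 h2 h3 i j hij, by
        have h := hQbound i j W; rwa [h1, one_pow, mul_one] at h⟩⟩
  · have hsub : {W : EuclideanSpace ℝ (Fin m) |
        ‖W‖ = 1 ∧ (∀ i j, i < j → 0 < Q i j W) ∧ Hbar W = c} ⊆ Metric.sphere 0 1 := by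
      intro W hW
      simpa [mem_sphere_zero_iff_norm] using hW.1
    have hclosed : IsClosed {W : EuclideanSpace ℝ (Fin m) |
        ‖W‖ = 1 ∧ (∀ i j, i < j → 0 < Q i j W) ∧ Hbar W = c} := by
      apply IsSeqClosed.isClosed
      intro x p hx hxp
      have h1 : ‖p‖ = 1 := by
        have h := hxp.norm
        have h' : (fun n => ‖x n‖) = fun _ => (1:ℝ) := funext fun n => (hx n).1
        rw [h'] at h
        exact (tendsto_nhds_unique h tendsto_const_nhds).symm ▸ rfl
      have hQp : ∀ i j, i < j → ε ≤ Q i j p := by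
        intro i j hij
        exact ge_of_tendsto' (((hQcont i j).tendsto p).comp hxp)
          (fun n => hkey (x n) (hx n).1 (hx n).2.1 (hx n).2.2 i j hij)
      have hQp' : ∀ i j, i < j → 0 < Q i j p := fun i j hij =>
        lt_of_lt_of_le hε (hQp i j hij)
      have hten : Filter.Tendsto (fun n => Hbar (x n)) Filter.atTop (nhds (Hbar p)) := by
        simp only [hHbar]
        apply Filter.Tendsto.const_mul
        apply tendsto_finset_sum
        intro i _
        apply tendsto_finset_sum
        intro j _
        by_cases hij : i < j
        · simp only [if_pos hij]
          exact Filter.Tendsto.const_mul _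
            (((Real.continuousAt_log (ne_of_gt (hQp' i j hij))).tendsto).comp
              (((hQcont i j).tendsto p).comp hxp))
        · simp only [if_neg hij]; exact tendsto_const_nhds
      have h3 : Hbar p = c := by
        have h4 : Filter.Tendsto (fun n => Hbar (x n)) Filter.atTop (nhds c) := by
          simp only [fun n => (hx n).2.2]; exact tendsto_const_nhds
        exact tendsto_nhds_unique hten h4
      exact ⟨h1, hQp', h3⟩
    exact (isCompact_sphere (0 : EuclideanSpace ℝ (Fin m)) 1).of_isClosed_subset hclosed hsub
end
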